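/- Let N ≥ 2 be an integer and let x > 0 be a real number. Then ∫₀¹ (N−1)(1−v)^{N−2} · e^{−√(x/v)} · (∑_{m=0}^{N−1} (x/v)^{m/2}/m!) dv = 2 ∑_{m=0}^{N−1} ∑_{i=0}^{N−2} binom(N−2, i) · ((−1)^i (N−1)/m!) · x^{i+1} · ∫_{√x}^∞ u^{m−2i−3} e^{−u} du, where the inner integral is the upper incomplete Gamma function Γ(m − 2i − 2, √x). -/

import Mathlib

open MeasureTheory Set

private lemma aux_pow_mul_exp_neg_le (m : ℕ) {t : ℝ} (ht : 0 ≤ t) :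
    t ^ m * Real.exp (-t) ≤ (m.factorial : ℝ) := by
  have h1 : t ^ m / (m.factorial : ℝ) ≤ Real.exp t := by
    calc t ^ m / (m.factorial : ℝ)
        ≤ ∑ i ∈ Finset.range (m + 1), t ^ i / (i.factorial : ℝ) :=
          Finset.single_le_sum (f := fun i => t ^ i / (i.factorial : ℝ))
            (fun i _ => by positivity) (Finset.self_mem_range_succ m)
      _ ≤ Real.exp t := Real.sum_le_exp_of_nonneg ht _
  have hfac : (0:ℝ) < (m.factorial : ℝ) := by positivity
  have h2 : t ^ m ≤ Real.exp t * (m.factorial : ℝ) := by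
    rw [div_le_iff₀ hfac] at h1; exact h1
  calc t ^ m * Real.exp (-t) ≤ (Real.exp t * (m.factorial : ℝ)) * Real.exp (-t) :=
        mul_le_mul_of_nonneg_right h2 (Real.exp_nonneg _)
    _ = (m.factorial : ℝ) * (Real.exp t * Real.exp (-t)) := by ring
    _ = (m.factorial : ℝ) := by rw [← Real.exp_add]; simp

/-- Complementary CDF of `νZ²` with `ν ∼ Beta(1, N−1)` and `Z ∼ Gamma(N,1)` independent:
`∫₀¹ (N−1)(1−v)^{N−2} e^{−√(x/v)} ∑_{m=0}^{N−1} (x/v)^{m/2}/m! dv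
  = 2 ∑_{m=0}^{N−1} ∑_{i=0}^{N−2} C(N−2,i) ((−1)^i (N−1)/m!) x^{i+1} Γ(m−2i−2, √x)`,
where `Γ(m−2i−2, t) = ∫_t^∞ u^{m−2i−3} e^{−u} du`. -/
theorem ccdf_nu_Z_sq (N : ℕ) (hN : 2 ≤ N) (x : ℝ) (hx : 0 < x) :
    ∫ v in (0:ℝ)..1, (N - 1 : ℝ) * (1 - v) ^ (N - 2) * Real.exp (-Real.sqrt (x / v)) *
        ∑ m ∈ Finset.range N, (x / v) ^ ((m : ℝ) / 2) / (m.factorial : ℝ) =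
    2 * ∑ m ∈ Finset.range N, ∑ i ∈ Finset.range (N - 1),
        (N - 2).choose i * ((-1 : ℝ) ^ i * (N - 1) / (m.factorial : ℝ)) * x ^ (i + 1) *
          ∫ u in Set.Ioi (Real.sqrt x), u ^ ((m : ℤ) - 2 * i - 3) * Real.exp (-u) := by
  have hsx : 0 < Real.sqrt x := Real.sqrt_pos.2 hx
  set sx : ℝ := Real.sqrt x with hsx_def
  set f : ℝ → ℝ := fun v => sx * v ^ (-(1/2) : ℝ) with hf_def
  set f' : ℝ → ℝ := fun v => sx * (-(1/2) * v ^ (-(1/2) - 1 : ℝ)) with hf'_def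
  -- derivative of the substitution
  have hderiv : ∀ v ∈ Ioo (0:ℝ) 1, HasDerivWithinAt f (f' v) (Ioo (0:ℝ) 1) v := by
    intro v hv
    exact ((Real.hasDerivAt_rpow_const (x := v) (p := -(1/2))
      (Or.inl hv.1.ne')).const_mul sx).hasDerivWithinAt
  -- injectivity of the substitution
  have hinj : InjOn f (Ioo (0:ℝ) 1) := by
    intro a ha b hb hab
    have h1 : a ^ (-(1/2) : ℝ) = b ^ (-(1/2) : ℝ) := mul_left_cancel₀ hsx.ne' hab
    have key : ∀ c : ℝ, 0 < c → (c ^ (-(1/2) : ℝ)) ^ (-(2:ℝ)) = c := by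
      intro c hc
      rw [← Real.rpow_mul hc.le]; norm_num
    rw [← key a ha.1, ← key b hb.1, h1]
  -- image of the substitution
  have himg : f '' Ioo (0:ℝ) 1 = Ioi sx := by
    ext u
    constructor
    · rintro ⟨v, ⟨hv0, hv1⟩, rfl⟩
      have h1 : 1 < v ^ (-(1/2) : ℝ) :=
        (Real.one_lt_rpow_iff_of_pos hv0).2 (Or.inr ⟨hv1, by norm_num⟩)
      exact (lt_mul_iff_one_lt_right hsx).2 h1
    · intro hu
      have hu' : sx < u := hu
      have hupos : 0 < u := hsx.trans hu'
      refine ⟨(sx / u) ^ 2, ⟨by positivity, ?_⟩, ?_⟩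
      · exact pow_lt_one₀ (by positivity) ((div_lt_one hupos).2 hu') two_ne_zero
      · show sx * ((sx / u) ^ 2) ^ (-(1/2) : ℝ) = u
        rw [← Real.rpow_natCast (sx / u) 2, ← Real.rpow_mul (by positivity)]
        norm_num
        rw [Real.rpow_neg_one]
        field_simp
  -- change of variables
  have hcov : ∀ g : ℝ → ℝ, ∫ u in Ioi sx, g u = ∫ v in Ioo (0:ℝ) 1, |f' v| * g (f v) := by
    intro g
    rw [← himg, integral_image_eq_integral_abs_deriv_smul measurableSet_Ioo hderiv hinj g]
    simp [smul_eq_mul]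
  -- pointwise facts on (0,1)
  have hfv : ∀ v ∈ Ioo (0:ℝ) 1, f v = Real.sqrt (x / v) := by
    intro v hv
    have h1 : v ^ (-(1/2) : ℝ) = (v ^ (1/(2:ℝ)))⁻¹ := by
      rw [← Real.rpow_neg_one (v ^ (1/(2:ℝ))), ← Real.rpow_mul hv.1.le]
      norm_num
    rw [hf_def]
    simp only
    rw [h1, Real.sqrt_div hx.le, Real.sqrt_eq_rpow v]
    exact (div_eq_mul_inv (Real.sqrt x) _).symm
  have htpos : ∀ v ∈ Ioo (0:ℝ) 1, 0 < Real.sqrt (x / v) := by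
    intro v hv; have hv0 := hv.1; exact Real.sqrt_pos.2 (by positivity)
  have ht2 : ∀ v ∈ Ioo (0:ℝ) 1, Real.sqrt (x / v) ^ 2 = x / v := by
    intro v hv; have hv0 := hv.1; exact Real.sq_sqrt (by positivity)
  have hrm : ∀ v ∈ Ioo (0:ℝ) 1, ∀ m : ℕ,
      (x / v) ^ ((m : ℝ) / 2) = Real.sqrt (x / v) ^ m := by
    intro v hv m
    have hv0 := hv.1
    rw [Real.sqrt_eq_rpow, ← Real.rpow_natCast ((x/v) ^ (1/(2:ℝ))) m,
      ← Real.rpow_mul (by positivity)]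
    congr 1; ring
  -- the per-term integrand
  set φ : ℕ → ℕ → ℝ → ℝ := fun m i v =>
    ((N-2).choose i : ℝ) * ((-1:ℝ)^i * (N-1) / (m.factorial : ℝ)) *
      (v ^ i * (Real.sqrt (x / v) ^ m * Real.exp (-Real.sqrt (x / v)))) with hφ_def
  -- algebraic expansion
  have expand : ∀ v t E : ℝ,
      (N - 1 : ℝ) * (∑ i ∈ Finset.range (N-1), ((N-2).choose i : ℝ) * (-v)^i) * E *
        (∑ m ∈ Finset.range N, t^m / (m.factorial : ℝ)) =
      ∑ m ∈ Finset.range N, ∑ i ∈ Finset.range (N-1),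
        ((N-2).choose i : ℝ) * ((-1:ℝ)^i * (N-1) / (m.factorial : ℝ)) *
          (v ^ i * (t^m * E)) := by
    intro v t E
    rw [Finset.mul_sum]
    refine Finset.sum_congr rfl fun m _ => ?_
    rw [Finset.mul_sum, Finset.sum_mul, Finset.sum_mul]
    refine Finset.sum_congr rfl fun i _ => ?_
    rw [neg_pow]
    ring
  -- binomial expansion
  have hbinom : ∀ v : ℝ, (1 - v : ℝ) ^ (N - 2) =
      ∑ i ∈ Finset.range (N-1), ((N-2).choose i : ℝ) * (-v)^i := by
    intro v
    have h := add_pow (-v) (1:ℝ) (N-2)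
    simp only [one_pow, mul_one] at h
    rw [show (1:ℝ) - v = -v + 1 by ring, h, show N - 2 + 1 = N - 1 by omega]
    exact Finset.sum_congr rfl fun i _ => by ring
  -- pointwise identity for the LHS integrand
  have hAv : ∀ v ∈ Ioo (0:ℝ) 1,
      (N - 1 : ℝ) * (1 - v) ^ (N - 2) * Real.exp (-Real.sqrt (x / v)) *
        ∑ m ∈ Finset.range N, (x / v) ^ ((m : ℝ) / 2) / (m.factorial : ℝ) =
      ∑ m ∈ Finset.range N, ∑ i ∈ Finset.range (N-1), φ m i v := by
    intro v hv
    have hs : ∑ m ∈ Finset.range N, (x / v) ^ ((m : ℝ) / 2) / (m.factorial : ℝ)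
        = ∑ m ∈ Finset.range N, Real.sqrt (x/v) ^ m / (m.factorial : ℝ) :=
      Finset.sum_congr rfl fun m _ => by rw [hrm v hv m]
    rw [hs, hbinom v, expand v (Real.sqrt (x/v)) (Real.exp (-Real.sqrt (x/v)))]
  -- integrability of each term
  have hint : ∀ m i : ℕ, IntegrableOn (φ m i) (Ioo (0:ℝ) 1) := by
    intro m i
    apply Measure.integrableOn_of_bounded (M := ((N-2).choose i : ℝ) * (N-1))
    · simp [Real.volume_Ioo]
    · apply Measurable.aestronglyMeasurable
      apply Measurable.const_mul
      apply Measurable.mul (measurable_id.pow_const i)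
      apply Measurable.mul
      · exact ((measurable_const.div measurable_id).sqrt).pow_const m
      · exact (((measurable_const.div measurable_id).sqrt).neg).exp
    · rw [ae_restrict_iff' measurableSet_Ioo]
      filter_upwards with v hv
      have hv0 : 0 < v := hv.1
      have hv1 : v < 1 := hv.2
      have ht0 : 0 ≤ Real.sqrt (x/v) := Real.sqrt_nonneg _
      have hb1 : v ^ i ≤ 1 := pow_le_one₀ hv0.le hv1.le
      have hb2 : Real.sqrt (x/v) ^ m * Real.exp (-Real.sqrt (x/v)) ≤ (m.factorial : ℝ) :=
        aux_pow_mul_exp_neg_le m ht0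
      have hN1 : (0:ℝ) ≤ (N:ℝ) - 1 := by
        have : (2:ℝ) ≤ N := by exact_mod_cast hN
        linarith
      have habs : ‖φ m i v‖ = ((N-2).choose i : ℝ) * ((N-1) / (m.factorial : ℝ)) *
          (v ^ i * (Real.sqrt (x / v) ^ m * Real.exp (-Real.sqrt (x / v)))) := by
        rw [hφ_def]
        simp only [Real.norm_eq_abs, abs_mul, abs_div, abs_pow, abs_neg, abs_one, one_pow,
          one_mul]
        rw [abs_of_nonneg hv0.le, abs_of_nonneg ht0,
          abs_of_nonneg (Real.exp_nonneg _), abs_of_nonneg hN1,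
          abs_of_nonneg (by positivity : (0:ℝ) ≤ ((N-2).choose i : ℝ)),
          abs_of_nonneg (by positivity : (0:ℝ) ≤ ((m.factorial : ℝ)))]
        try ring
      rw [habs]
      calc ((N-2).choose i : ℝ) * ((N-1) / (m.factorial : ℝ)) *
            (v ^ i * (Real.sqrt (x / v) ^ m * Real.exp (-Real.sqrt (x / v))))
          ≤ ((N-2).choose i : ℝ) * ((N-1) / (m.factorial : ℝ)) * (1 * (m.factorial : ℝ)) := by
            apply mul_le_mul_of_nonneg_left
            · exact mul_le_mul hb1 hb2 (by positivity) (by norm_num)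
            · positivity
        _ = ((N-2).choose i : ℝ) * ((N-1) * ((m.factorial : ℝ) / (m.factorial : ℝ))) := by ring
        _ = ((N-2).choose i : ℝ) * (N-1) := by
            rw [div_self (by positivity : ((m.factorial : ℝ)) ≠ 0), mul_one]
  -- per-term change of variables
  have hterm : ∀ m i : ℕ,
      2 * (((N - 2).choose i : ℝ) * ((-1 : ℝ) ^ i * (N - 1) / (m.factorial : ℝ)) * x ^ (i + 1) *
        ∫ u in Set.Ioi sx, u ^ ((m : ℤ) - 2 * i - 3) * Real.exp (-u)) =
      ∫ v in Ioo (0:ℝ) 1, φ m i v := by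
    intro m i
    rw [hcov (fun u => u ^ ((m : ℤ) - 2 * i - 3) * Real.exp (-u))]
    rw [show (2 : ℝ) * (((N - 2).choose i : ℝ) * ((-1 : ℝ) ^ i * (N - 1) / (m.factorial : ℝ)) *
          x ^ (i + 1) * ∫ v in Ioo (0:ℝ) 1,
            |f' v| * ((f v) ^ ((m : ℤ) - 2 * i - 3) * Real.exp (-(f v)))) =
        ∫ v in Ioo (0:ℝ) 1,
          (2 * (((N - 2).choose i : ℝ) * ((-1 : ℝ) ^ i * (N - 1) / (m.factorial : ℝ)) *
            x ^ (i + 1))) * (|f' v| * ((f v) ^ ((m : ℤ) - 2 * i - 3) * Real.exp (-(f v)))) from by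
      rw [integral_const_mul]; ring]
    apply setIntegral_congr_fun measurableSet_Ioo
    intro v hv
    have hv0 : 0 < v := hv.1
    set t : ℝ := Real.sqrt (x / v) with ht_def
    have htp : 0 < t := htpos v hv
    have ht2' : t ^ 2 = x / v := ht2 v hv
    have hfvt : f v = t := hfv v hv
    -- |f' v| = t / (2 * v)
    have habs : |f' v| = t / (2 * v) := by
      have hw : (0:ℝ) < v ^ (-(1/2) - 1 : ℝ) := Real.rpow_pos_of_pos hv0 _
      have : f' v = -(sx * (1/2 * v ^ (-(1/2) - 1 : ℝ))) := by rw [hf'_def]; ring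
      rw [this, abs_neg, abs_of_nonneg (by positivity)]
      have hsplit : v ^ (-(1/2) - 1 : ℝ) = v ^ (-(1/2) : ℝ) * v⁻¹ := by
        rw [← Real.rpow_neg_one v, ← Real.rpow_add hv0]
        norm_num
      rw [hsplit, ← hfvt, hf_def]
      field_simp
    -- t ^ (m - 2i - 3) = t^m / ((x/v)^(i+1) * t)
    have htk : t ^ ((m : ℤ) - 2 * i - 3) = t ^ m / ((x / v) ^ (i + 1) * t) := by
      have h1 : t ^ ((m : ℤ) - 2 * i - 3) = t ^ (m : ℤ) / t ^ ((2 * i + 3 : ℕ) : ℤ) := by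
        rw [← zpow_sub₀ htp.ne']
        congr 1
        push_cast
        ring
      rw [zpow_natCast, zpow_natCast] at h1
      have h2 : t ^ (2 * i + 3) = (x / v) ^ (i + 1) * t := by
        calc t ^ (2 * i + 3) = (t ^ 2) ^ (i + 1) * t := by ring
          _ = (x / v) ^ (i + 1) * t := by rw [ht2']
      rw [h1, h2]
    simp only [smul_eq_mul]
    rw [hfvt, habs, htk, hφ_def]
    simp only [← ht_def]
    have hxvne : ((x / v) : ℝ) ^ (i + 1) ≠ 0 := by positivity
    have hvne : v ≠ 0 := hv0.ne'
    field_simp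
    ring_nf
    have hvv : v * v ^ i * v⁻¹ * v⁻¹ ^ i = 1 := by rw [inv_pow]; field_simp
    linear_combination (-(((N - 2).choose i : ℝ) * N * x * x ^ i) + ((N - 2).choose i : ℝ) * x * x ^ i) * hvv
  -- assemble
  rw [intervalIntegral.integral_of_le zero_le_one, MeasureTheory.integral_Ioc_eq_integral_Ioo]
  rw [setIntegral_congr_fun measurableSet_Ioo hAv]
  rw [integral_finset_sum _ (fun m _ => integrable_finset_sum _ (fun i _ => hint m i))]
  rw [Finset.mul_sum]
  refine Finset.sum_congr rfl fun m _ => ?_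
  rw [integral_finset_sum _ (fun i _ => hint m i), Finset.mul_sum]
  exact Finset.sum_congr rfl fun i _ => (hterm m i).symm
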